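/- Let f : ℝ → [0,1] be the 2-periodic 'seesaw' function with f(x) = x − 2k for x ∈ [2k, 2k+1] and f(x) = 2k+2 − x for x ∈ [2k+1, 2k+2]. If U is uniform on [0,1] and V is any real random variable independent of U whose law is symmetric (V ≍ −V), then f(U + V) is uniform on [0,1]. -/

import Mathlib

open MeasureTheory ProbabilityTheory

/-- The 2-periodic "seesaw" (tent) function: distance to the nearest even integer.
On `[2k, 2k+1]` it equals `x − 2k`, and on `[2k+1, 2k+2]` it equals `2k+2 − x`. -/
noncomputable def tent (x : ℝ) : ℝ := |x - 2 * round (x / 2)|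

lemma round_eq_of (n : ℤ) (y : ℝ) (h1 : (n : ℝ) - 1/2 ≤ y) (h2 : y < (n : ℝ) + 1/2) :
    round y = n := by
  rw [round_eq, Int.floor_eq_iff]
  constructor <;> push_cast <;> linarith

lemma tent_add_two_int (x : ℝ) (n : ℤ) : tent (x + 2 * n) = tent x := by
  unfold tent
  have h : (x + 2 * n) / 2 = x / 2 + n := by ring
  rw [h, round_add_intCast]
  congr 1
  push_cast
  ring

lemma tent_neg (x : ℝ) : tent (-x) = tent x := by
  unfold tent
  set r := round (x / 2) with hr
  have h1 : (r : ℝ) ≤ x / 2 + 1/2 := by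
    rw [hr, round_eq]; exact_mod_cast Int.floor_le (x / 2 + 1/2)
  have h2 : x / 2 + 1/2 < (r : ℝ) + 1 := by
    rw [hr, round_eq]; exact_mod_cast Int.lt_floor_add_one (x / 2 + 1/2)
  rcases eq_or_lt_of_le h1 with hb | hb
  · -- x = 2r - 1
    have hx : x = 2 * r - 1 := by linarith
    have hrn : round (-x / 2) = 1 - r := by
      apply round_eq_of
      · push_cast; rw [hx]; ring_nf; linarith
      · push_cast; rw [hx]; ring_nf; linarith
    rw [hrn, hx]
    push_cast
    rw [show -(2 * (r:ℝ) - 1) - 2 * (1 - r) = -1 by ring,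
      show 2 * (r:ℝ) - 1 - 2 * r = -1 by ring]
  · have hrn : round (-x / 2) = -r := by
      apply round_eq_of
      · push_cast; linarith
      · push_cast; linarith
    rw [hrn]
    push_cast
    rw [show -x - 2 * -(r:ℝ) = -(x - 2 * r) by ring, abs_neg]

lemma tent_eq_self {x : ℝ} (h0 : 0 ≤ x) (h1 : x ≤ 1) : tent x = x := by
  unfold tent
  rcases eq_or_lt_of_le h1 with he | he
  · subst he
    have : round ((1:ℝ) / 2) = 1 := by apply round_eq_of <;> norm_num
    rw [this]; norm_num
  · have : round (x / 2) = 0 := by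
      apply round_eq_of <;> push_cast <;> linarith
    rw [this]
    push_cast
    rw [mul_zero, sub_zero, abs_of_nonneg h0]

lemma tent_eq_two_sub {x : ℝ} (h1 : 1 ≤ x) (h2 : x ≤ 2) : tent x = 2 - x := by
  unfold tent
  have : round (x / 2) = 1 := by
    apply round_eq_of <;> push_cast <;> linarith
  rw [this]
  push_cast
  rw [show x - 2 * 1 = -(2 - x) by ring, abs_neg, abs_of_nonneg (by linarith)]

lemma measurable_tent : Measurable tent := by
  unfold tent
  apply Measurable.abs
  apply measurable_id.sub
  apply Measurable.const_mul
  have : Measurable (fun x : ℝ => (round (x / 2) : ℤ)) := by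
    simp_rw [round_eq]
    exact ((measurable_id.div_const 2).add_const _).floor
  exact (measurable_from_top (f := (Int.cast : ℤ → ℝ))).comp this

lemma vol_shift (s : Set ℝ) (c : ℤ) (p q : ℝ) :
    volume (tent ⁻¹' s ∩ Set.Ioc (p + 2 * c) (q + 2 * c)) =
      volume (tent ⁻¹' s ∩ Set.Ioc p q) := by
  have h : (fun x : ℝ => x + 2 * (c : ℝ)) ⁻¹' (tent ⁻¹' s ∩ Set.Ioc (p + 2 * c) (q + 2 * c)) =
      tent ⁻¹' s ∩ Set.Ioc p q := by
    ext x
    simp only [Set.mem_preimage, Set.mem_inter_iff, Set.mem_Ioc, tent_add_two_int]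
    constructor
    · rintro ⟨h1, h2, h3⟩; exact ⟨h1, by linarith, by linarith⟩
    · rintro ⟨h1, h2, h3⟩; exact ⟨h1, by linarith, by linarith⟩
  rw [← h, measure_preimage_add_right]

lemma vol_inter_Ioc_split {E : Set ℝ} (hE : MeasurableSet E) {p q r : ℝ}
    (h1 : p ≤ q) (h2 : q ≤ r) :
    volume (E ∩ Set.Ioc p r) = volume (E ∩ Set.Ioc p q) + volume (E ∩ Set.Ioc q r) := by
  rw [← Set.Ioc_union_Ioc_eq_Ioc h1 h2, Set.inter_union_distrib_left]
  exact measure_union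
    ((Set.Ioc_disjoint_Ioc_of_le le_rfl).mono Set.inter_subset_right Set.inter_subset_right)
    (hE.inter measurableSet_Ioc)

lemma tent_key (s : Set ℝ) (hs : MeasurableSet s) (a : ℝ) :
    volume (tent ⁻¹' s ∩ Set.Ioc a (a + 2)) =
      volume (s ∩ Set.Ioc 0 1) + volume (s ∩ Set.Ioc 0 1) := by
  have hE : MeasurableSet (tent ⁻¹' s) := measurable_tent hs
  set n : ℤ := ⌈a / 2⌉ with hn
  have h1 : a ≤ 2 * (n : ℝ) := by
    have := Int.le_ceil (a / 2); rw [← hn] at this; linarith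
  have h2 : 2 * (n : ℝ) ≤ a + 2 := by
    have := Int.ceil_lt_add_one (a / 2); rw [← hn] at this; linarith
  set b : ℝ := a + 2 - 2 * n with hb
  have hb0 : 0 ≤ b := by rw [hb]; linarith
  have hb2 : b ≤ 2 := by rw [hb]; linarith
  have step1 : volume (tent ⁻¹' s ∩ Set.Ioc a (a + 2)) =
      volume (tent ⁻¹' s ∩ Set.Ioc 0 2) := by
    rw [vol_inter_Ioc_split hE h1 h2]
    have e1 : a = b + 2 * ((n - 1 : ℤ) : ℝ) := by push_cast; rw [hb]; ring
    have e2 : 2 * (n : ℝ) = 2 + 2 * ((n - 1 : ℤ) : ℝ) := by push_cast; ring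
    have e3 : (2 : ℝ) * (n : ℝ) = 0 + 2 * (n : ℝ) := by ring
    have e4 : a + 2 = b + 2 * (n : ℝ) := by rw [hb]; ring
    rw [show volume (tent ⁻¹' s ∩ Set.Ioc a (2 * (n:ℝ))) =
        volume (tent ⁻¹' s ∩ Set.Ioc b 2) by rw [e1, e2]; exact vol_shift s (n - 1) b 2,
      show volume (tent ⁻¹' s ∩ Set.Ioc (2 * (n:ℝ)) (a + 2)) =
        volume (tent ⁻¹' s ∩ Set.Ioc 0 b) by rw [e3, e4]; exact_mod_cast vol_shift s n 0 b,
      add_comm, ← vol_inter_Ioc_split hE hb0 hb2]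
  rw [step1, vol_inter_Ioc_split hE (by norm_num : (0:ℝ) ≤ 1) (by norm_num : (1:ℝ) ≤ 2)]
  congr 1
  · congr 1
    ext x
    simp only [Set.mem_inter_iff, Set.mem_preimage, Set.mem_Ioc]
    constructor
    · rintro ⟨h1, h2⟩; rw [tent_eq_self h2.1.le h2.2] at h1; exact ⟨h1, h2⟩
    · rintro ⟨h1, h2⟩; rw [tent_eq_self h2.1.le h2.2]; exact ⟨h1, h2⟩
  · have e : tent ⁻¹' s ∩ Set.Ioc 1 2 =
        (fun x : ℝ => 2 + -x) ⁻¹' (s ∩ Set.Ico 0 1) := by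
      ext x
      simp only [Set.mem_inter_iff, Set.mem_preimage, Set.mem_Ioc, Set.mem_Ico]
      constructor
      · rintro ⟨h1, h2⟩
        rw [tent_eq_two_sub h2.1.le h2.2] at h1
        exact ⟨by rw [show (2:ℝ) + -x = 2 - x by ring]; exact h1,
          by linarith [h2.2], by linarith [h2.1]⟩
      · rintro ⟨h1, h2, h3⟩
        have hx1 : 1 < x := by linarith
        have hx2 : x ≤ 2 := by linarith
        rw [tent_eq_two_sub hx1.le hx2]
        exact ⟨by rw [show (2:ℝ) - x = 2 + -x by ring]; exact h1, hx1, hx2⟩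
    rw [e, show (fun x : ℝ => 2 + -x) = (fun y : ℝ => 2 + y) ∘ Neg.neg from rfl,
      Set.preimage_comp, Measure.measure_preimage_neg, measure_preimage_add]
    exact measure_congr (MeasureTheory.ae_eq_set_inter (ae_eq_refl s) Ico_ae_eq_Ioc)

lemma tent_gsum (s : Set ℝ) (hs : MeasurableSet s) (v : ℝ) :
    volume (tent ⁻¹' s ∩ Set.Icc v (v + 1)) + volume (tent ⁻¹' s ∩ Set.Icc (-v) (-v + 1)) =
      volume (s ∩ Set.Ioc 0 1) + volume (s ∩ Set.Ioc 0 1) := by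
  have hE : MeasurableSet (tent ⁻¹' s) := measurable_tent hs
  have hIcc : ∀ w : ℝ, volume (tent ⁻¹' s ∩ Set.Icc w (w + 1)) =
      volume (tent ⁻¹' s ∩ Set.Ioc w (w + 1)) :=
    fun w => (measure_congr (MeasureTheory.ae_eq_set_inter (ae_eq_refl _) Ioc_ae_eq_Icc)).symm
  rw [hIcc, hIcc]
  have claim2 : volume (tent ⁻¹' s ∩ Set.Ioc (-v) (-v + 1)) =
      volume (tent ⁻¹' s ∩ Set.Ioc (v + 1) (v + 2)) := by
    have e1 : tent ⁻¹' s ∩ Set.Ioc (-v) (-v + 1) =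
        Neg.neg ⁻¹' (tent ⁻¹' s ∩ Set.Ico (v - 1) v) := by
      ext x
      simp only [Set.mem_inter_iff, Set.mem_preimage, Set.mem_Ioc, Set.mem_Ico, tent_neg]
      constructor <;> rintro ⟨h1, h2, h3⟩ <;> exact ⟨h1, by linarith, by linarith⟩
    have hv := vol_shift s (-1) (v + 1) (v + 2)
    push_cast at hv
    rw [show v + 1 + 2 * (-1 : ℝ) = v - 1 by ring, show v + 2 + 2 * (-1 : ℝ) = v by ring] at hv
    rw [e1, Measure.measure_preimage_neg,
      measure_congr (μ := (volume : Measure ℝ)) (MeasureTheory.ae_eq_set_inter (ae_eq_refl (tent ⁻¹' s)) (Ico_ae_eq_Ioc (a := v - 1) (b := v))), ← hv]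
  rw [claim2, ← vol_inter_Ioc_split hE (by linarith : v ≤ v + 1) (by linarith : v + 1 ≤ v + 2)]
  exact tent_key s hs v

/-- If `U` is uniform on `[0,1]` and `V` is independent of `U` with symmetric law,
then `tent (U + V)` is uniform on `[0,1]`. -/
theorem stmt_7 {Ω : Type*} [MeasureSpace Ω] (μ : Measure Ω) [IsProbabilityMeasure μ]
    (U V : Ω → ℝ) (hU : Measurable U) (hV : Measurable V)
    (hUnif : pdf.IsUniform U (Set.Icc (0:ℝ) 1) μ)
    (hIndep : IndepFun U V μ)
    (hSym : Measure.map V μ = Measure.map (fun ω => -V ω) μ) :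
    pdf.IsUniform (fun ω => tent (U ω + V ω)) (Set.Icc (0:ℝ) 1) μ := by
  have hvol1 : volume (Set.Icc (0:ℝ) 1) = 1 := by simp
  have hcond : ProbabilityTheory.cond volume (Set.Icc (0:ℝ) 1) =
      volume.restrict (Set.Icc (0:ℝ) 1) := by
    unfold ProbabilityTheory.cond
    rw [hvol1]
    simp
  have hU' : Measure.map U μ = volume.restrict (Set.Icc (0:ℝ) 1) := by
    have h := hUnif
    unfold pdf.IsUniform at h
    rw [h, hcond]
  unfold pdf.IsUniform
  rw [hcond]
  set P : Measure ℝ := volume.restrict (Set.Icc (0:ℝ) 1) with hP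
  set ν : Measure ℝ := Measure.map V μ with hν
  have hνprob : IsProbabilityMeasure ν := Measure.isProbabilityMeasure_map hV.aemeasurable
  have hpair : Measure.map (fun ω => (U ω, V ω)) μ = P.prod ν := by
    rw [← hU']
    exact (indepFun_iff_map_prod_eq_prod_map_map hU.aemeasurable hV.aemeasurable).mp hIndep
  have hνneg : Measure.map Neg.neg ν = ν := by
    rw [hν, Measure.map_map measurable_neg hV]
    exact hSym.symm
  apply Measure.ext
  intro s hs
  have hE : MeasurableSet (tent ⁻¹' s) := measurable_tent hs
  set Sp : Set (ℝ × ℝ) := (fun p : ℝ × ℝ => p.1 + p.2) ⁻¹' (tent ⁻¹' s) with hSp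
  set Sm : Set (ℝ × ℝ) := (fun p : ℝ × ℝ => p.1 - p.2) ⁻¹' (tent ⁻¹' s) with hSm
  have hSpm : MeasurableSet Sp := (measurable_fst.add measurable_snd) hE
  have hSmm : MeasurableSet Sm := (measurable_fst.sub measurable_snd) hE
  have hmap : Measure.map (fun ω => tent (U ω + V ω)) μ s = (P.prod ν) Sp := by
    rw [Measure.map_apply (show Measurable fun ω => tent (U ω + V ω) from
      measurable_tent.comp (hU.add hV)) hs, ← hpair,
      Measure.map_apply (hU.prodMk hV) hSpm]
    rfl
  have hprodmap : P.prod ν = Measure.map (Prod.map (id : ℝ → ℝ) Neg.neg) (P.prod ν) := by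
    rw [← Measure.map_prod_map P ν measurable_id measurable_neg, Measure.map_id, hνneg]
  have hswap : (P.prod ν) Sm = (P.prod ν) Sp := by
    conv_lhs => rw [hprodmap]
    rw [Measure.map_apply (measurable_id.prodMap measurable_neg) hSmm]
    congr 1
    ext p
    simp only [hSp, hSm, Set.mem_preimage, Prod.map, id_eq, sub_neg_eq_add]
  have hslice : ∀ v : ℝ, P ((fun x => (x, v)) ⁻¹' Sp) + P ((fun x => (x, v)) ⁻¹' Sm) =
      volume (s ∩ Set.Ioc 0 1) + volume (s ∩ Set.Ioc 0 1) := by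
    intro v
    have e1 : (fun x : ℝ => (x, v)) ⁻¹' Sp = (fun u : ℝ => u + v) ⁻¹' (tent ⁻¹' s) := rfl
    have e2 : (fun x : ℝ => (x, v)) ⁻¹' Sm = (fun u : ℝ => u - v) ⁻¹' (tent ⁻¹' s) := rfl
    rw [e1, e2, hP,
      Measure.restrict_apply (hE.preimage (measurable_add_const v)),
      Measure.restrict_apply (hE.preimage (measurable_sub_const v))]
    have e3 : (fun u : ℝ => u + v) ⁻¹' (tent ⁻¹' s) ∩ Set.Icc 0 1 =
        (fun u : ℝ => u + v) ⁻¹' (tent ⁻¹' s ∩ Set.Icc v (v + 1)) := by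
      ext x
      simp only [Set.mem_inter_iff, Set.mem_preimage, Set.mem_Icc]
      constructor <;> rintro ⟨a, b, c⟩ <;> exact ⟨a, by linarith, by linarith⟩
    have e4 : (fun u : ℝ => u - v) ⁻¹' (tent ⁻¹' s) ∩ Set.Icc 0 1 =
        (fun u : ℝ => u + -v) ⁻¹' (tent ⁻¹' s ∩ Set.Icc (-v) (-v + 1)) := by
      ext x
      simp only [Set.mem_inter_iff, Set.mem_preimage, Set.mem_Icc, sub_eq_add_neg]
      constructor <;> rintro ⟨a, b, c⟩ <;> exact ⟨a, by linarith, by linarith⟩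
    rw [e3, e4, measure_preimage_add_right, measure_preimage_add_right]
    exact tent_gsum s hs v
  have hsum : (P.prod ν) Sp + (P.prod ν) Sm =
      volume (s ∩ Set.Ioc 0 1) + volume (s ∩ Set.Ioc 0 1) := by
    rw [Measure.prod_apply_symm hSpm, Measure.prod_apply_symm hSmm,
      ← lintegral_add_left (measurable_measure_prodMk_right hSpm)]
    rw [lintegral_congr hslice, lintegral_const, measure_univ, mul_one]
  rw [hswap] at hsum
  have hT : (P.prod ν) Sp = volume (s ∩ Set.Ioc 0 1) := by
    have h2 : (2 : ENNReal) * ((P.prod ν) Sp) = 2 * volume (s ∩ Set.Ioc 0 1) := by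
      rw [two_mul, two_mul]; exact hsum
    exact (ENNReal.mul_right_inj (by norm_num) (by norm_num)).mp h2
  rw [hmap, hT, hP, Measure.restrict_apply hs]
  exact measure_congr (MeasureTheory.ae_eq_set_inter (ae_eq_refl s) Ioc_ae_eq_Icc)
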